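/- Let (X, α) be a partial dynamical system and let X̃ = ⋃_{N∈ℕ} X_N ∪ X_∞ ⊆ ∏_{n∈ℕ}(X ∪ {0}) be its α-extension, where X_N consists of finite anti-orbits (x₀,...,x_N,0,...) with x_N ∉ Δ₋₁ = α(Δ₁), and X_∞ consists of infinite anti-orbits. Then the following are equivalent: (a) Δ₋₁ = α(Δ₁) is open in X; (b) X̃ is compact; (c) X₀ is compact. -/

import Mathlib

open Set

variable {X : Type*}

/-- `pdsDom α Δ n` is the domain `Δₙ` of the `n`-th iterate of the
partial map `α : Δ → X`. -/
def pdsDom (α : X → X) (Δ : Set X) : ℕ → Set X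
  | 0 => Set.univ
  | n + 1 => Δ ∩ α ⁻¹' pdsDom α Δ n

/-- The point `0` adjoined to `X`: we realize `X ∪ {0}` as `X ⊕ Unit`,
with `0 := Sum.inr ()`. -/
abbrev pdsZero (X : Type*) : X ⊕ Unit := Sum.inr ()

/-- The set `X_∞` of infinite anti-orbits of `(X, α)`, inside the
product `∏_{n ∈ ℕ} (X ∪ {0})`. -/
def XInf (α : X → X) (Δ : Set X) : Set (ℕ → X ⊕ Unit) :=
  {p | (∀ n, ∃ x, p n = Sum.inl x ∧ x ∈ pdsDom α Δ n) ∧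
       (∀ n x, p (n + 1) = Sum.inl x → x ∈ Δ ∧ p n = Sum.inl (α x))}

/-- The set `X_N` of anti-orbits of length exactly `N`: sequences
`(x₀, …, x_N, 0, 0, …)` with `xₙ ∈ Δₙ`, `α xₙ = x_{n-1}` and `x_N ∉ α(Δ)`. -/
def XN (α : X → X) (Δ : Set X) (N : ℕ) : Set (ℕ → X ⊕ Unit) :=
  {p | (∀ n ≤ N, ∃ x, p n = Sum.inl x ∧ x ∈ pdsDom α Δ n) ∧
       (∀ n, N < n → p n = pdsZero X) ∧
       (∀ n x, p (n + 1) = Sum.inl x → x ∈ Δ ∧ p n = Sum.inl (α x)) ∧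
       (∀ x, p N = Sum.inl x → x ∉ α '' Δ)}

/-- The `α`-extension `X̃ = ⋃_N X_N ∪ X_∞` of `X`. -/
def Xtilde (α : X → X) (Δ : Set X) : Set (ℕ → X ⊕ Unit) :=
  (⋃ N, XN α Δ N) ∪ XInf α Δ

/-- The map `α̃ : (x₀, x₁, …) ↦ (α x₀, x₀, x₁, …)` on sequences. -/
def tShift (α : X → X) : (ℕ → X ⊕ Unit) → (ℕ → X ⊕ Unit) :=
  fun p n => Nat.casesOn n (Sum.map α id (p 0)) fun k => p k

/-- The backwards shift `(x₀, x₁, x₂, …) ↦ (x₁, x₂, …)`. -/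
def bShift : (ℕ → X ⊕ Unit) → (ℕ → X ⊕ Unit) := fun p n => p (n + 1)

/-- The domain `Δ̃₁ = {x̃ ∈ X̃ : x₀ ∈ Δ₁}` of `α̃`. -/
def tDelta1 (α : X → X) (Δ : Set X) : Set (ℕ → X ⊕ Unit) :=
  {p | p ∈ Xtilde α Δ ∧ ∃ x ∈ Δ, p 0 = Sum.inl x}

/-- The image `Δ̃₋₁ = {x̃ ∈ X̃ : x₁ ≠ 0}` of `α̃`. -/
def tDeltaM1 (α : X → X) (Δ : Set X) : Set (ℕ → X ⊕ Unit) :=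
  {p | p ∈ Xtilde α Δ ∧ p 1 ≠ pdsZero X}

/-- `V` is invariant under the partial map `α : Δ → X`:
`αⁿ(V ∩ Δₙ) = V ∩ Δ₋ₙ` for all `n ∈ ℕ`. -/
def PdsInvariant (α : X → X) (Δ : Set X) (V : Set X) : Prop :=
  ∀ n : ℕ, α^[n] '' (V ∩ pdsDom α Δ n) = V ∩ α^[n] '' pdsDom α Δ n

/-- The set `Fₙ = {x ∈ Δₙ : αⁿ x = x}` of `n`-periodic points. -/
def pdsFix (α : X → X) (Δ : Set X) (n : ℕ) : Set X :=
  {x | x ∈ pdsDom α Δ n ∧ α^[n] x = x}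

/-- Topological freedom of the partial map `α : Δ → X`: for every `n > 0`,
every nonempty relatively open subset of `Fₙ` contains a point `x` with
`|α⁻ᵏ(x)| > 1` for some `1 ≤ k ≤ n`. -/
def TopFree [TopologicalSpace X] (α : X → X) (Δ : Set X) : Prop :=
  ∀ n : ℕ, 0 < n → ∀ W : Set X, IsOpen W → (W ∩ pdsFix α Δ n).Nonempty →
    ∃ x ∈ W ∩ pdsFix α Δ n, ∃ k, 1 ≤ k ∧ k ≤ n ∧
      ∃ y z, y ∈ pdsDom α Δ k ∧ z ∈ pdsDom α Δ k ∧
        α^[k] y = x ∧ α^[k] z = x ∧ y ≠ z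

section Aux

variable [TopologicalSpace X]

open Classical in
/-- Extension of `α` to a total map `X → X ⊕ Unit`, sending `Δᶜ` to `0`. -/
noncomputable def pdsBeta (α : X → X) (Δ : Set X) : X → X ⊕ Unit :=
  fun x => if x ∈ Δ then Sum.inl (α x) else pdsZero X

/-- Extension of `α` to a total map `X ⊕ Unit → X ⊕ Unit`. -/
noncomputable def pdsH (α : X → X) (Δ : Set X) : X ⊕ Unit → X ⊕ Unit :=
  Sum.elim (pdsBeta α Δ) (fun _ => pdsZero X)

lemma continuous_pdsBeta {Δ : Set X} (hΔ : IsClopen Δ) {α : X → X}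
    (hα : ContinuousOn α Δ) : Continuous (pdsBeta α Δ) := by
  rw [continuous_iff_continuousAt]
  intro x
  by_cases hx : x ∈ Δ
  · have h1 : ContinuousAt (fun y => (Sum.inl (α y) : X ⊕ Unit)) x :=
      continuous_inl.continuousAt.comp (hα.continuousAt (hΔ.isOpen.mem_nhds hx))
    refine h1.congr ?_
    filter_upwards [hΔ.isOpen.mem_nhds hx] with y hy
    simp [pdsBeta, hy]
  · refine continuousAt_const.congr (f := fun _ => pdsZero X) ?_
    filter_upwards [hΔ.compl.isOpen.mem_nhds hx] with y hy
    simp [pdsBeta, show y ∉ Δ from hy]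

lemma continuous_pdsH {Δ : Set X} (hΔ : IsClopen Δ) {α : X → X}
    (hα : ContinuousOn α Δ) : Continuous (pdsH α Δ) :=
  (continuous_pdsBeta hΔ hα).sumElim continuous_const

/-- A closed-shaped description of `Xtilde`. -/
def goodSet (α : X → X) (Δ : Set X) : Set (ℕ → X ⊕ Unit) :=
  {p | p 0 ≠ pdsZero X} ∩
  ((⋂ n : ℕ, ({p : ℕ → X ⊕ Unit | p (n+1) = pdsZero X} ∪
      ({p | pdsH α Δ (p (n+1)) ≠ pdsZero X} ∩ {p | p n = pdsH α Δ (p (n+1))}))) ∩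
  ((⋂ n : ℕ, ({p : ℕ → X ⊕ Unit | p (n+1) ≠ pdsZero X} ∪ {p | p n = pdsZero X} ∪
      {p | p n ∈ Sum.inl '' (α '' Δ)ᶜ})) ∩
   (⋂ n : ℕ, ({p : ℕ → X ⊕ Unit | p n ≠ pdsZero X} ∪ {p | p (n+1) = pdsZero X}))))

lemma pdsH_iff (α : X → X) (Δ : Set X) (a b : X ⊕ Unit) :
    (b = pdsZero X ∨ (pdsH α Δ b ≠ pdsZero X ∧ a = pdsH α Δ b)) ↔
    (∀ x, b = Sum.inl x → x ∈ Δ ∧ a = Sum.inl (α x)) := by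
  cases b with
  | inr u => simp
  | inl x =>
    by_cases hx : x ∈ Δ <;> simp [pdsH, pdsBeta, hx]

lemma mem_goodSet {α : X → X} {Δ : Set X} {p : ℕ → X ⊕ Unit} :
    p ∈ goodSet α Δ ↔
      p 0 ≠ pdsZero X ∧
      (∀ n x, p (n + 1) = Sum.inl x → x ∈ Δ ∧ p n = Sum.inl (α x)) ∧
      (∀ n, p (n + 1) = pdsZero X →
        p n = pdsZero X ∨ ∃ x, p n = Sum.inl x ∧ x ∉ α '' Δ) ∧
      (∀ n, p n = pdsZero X → p (n + 1) = pdsZero X) := by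
  simp only [goodSet, Set.mem_inter_iff, Set.mem_iInter, Set.mem_union, Set.mem_setOf_eq]
  constructor
  · rintro ⟨h1, h2, h3, h4⟩
    refine ⟨h1, fun n => (pdsH_iff α Δ (p n) (p (n+1))).mp (h2 n), fun n hn => ?_, fun n hn => ?_⟩
    · rcases h3 n with (h | h) | h
      · exact absurd hn h
      · exact Or.inl h
      · obtain ⟨x, hx', hx⟩ := h
        exact Or.inr ⟨x, hx.symm, hx'⟩
    · rcases h4 n with h | h
      · exact absurd hn h
      · exact h
  · rintro ⟨h1, h2, h3, h4⟩
    refine ⟨h1, fun n => (pdsH_iff α Δ (p n) (p (n+1))).mpr (h2 n), fun n => ?_, fun n => ?_⟩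
    · by_cases hn : p (n + 1) = pdsZero X
      · rcases h3 n hn with h | ⟨x, hx, hx'⟩
        · exact Or.inl (Or.inr h)
        · exact Or.inr ⟨x, hx', hx.symm⟩
      · exact Or.inl (Or.inl hn)
    · by_cases hn : p n = pdsZero X
      · exact Or.inr (h4 n hn)
      · exact Or.inl hn

lemma mem_pdsDom_of {α : X → X} {Δ : Set X} {p : ℕ → X ⊕ Unit}
    (h2 : ∀ n x, p (n + 1) = Sum.inl x → x ∈ Δ ∧ p n = Sum.inl (α x)) :
    ∀ n x, p n = Sum.inl x → x ∈ pdsDom α Δ n := by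
  intro n
  induction n with
  | zero => intro x _; exact Set.mem_univ x
  | succ n ih =>
    intro x hx
    obtain ⟨hxΔ, hpn⟩ := h2 n x hx
    exact ⟨hxΔ, ih (α x) hpn⟩

lemma xtilde_eq_goodSet (α : X → X) (Δ : Set X) : Xtilde α Δ = goodSet α Δ := by
  classical
  ext p
  rw [mem_goodSet]
  constructor
  · rintro (hmem | hmem)
    · rw [Set.mem_iUnion] at hmem
      obtain ⟨N, h1, h2, h3, h4⟩ := hmem
      obtain ⟨x0, hx0, -⟩ := h1 0 (Nat.zero_le N)
      refine ⟨by simp [hx0], h3, fun n hn => ?_, fun n hn => ?_⟩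
      · rcases lt_trichotomy n N with h | h | h
        · obtain ⟨x, hx, -⟩ := h1 (n + 1) h
          simp [hx] at hn
        · subst h
          obtain ⟨x, hx, -⟩ := h1 n le_rfl
          exact Or.inr ⟨x, hx, h4 x hx⟩
        · exact Or.inl (h2 n h)
      · by_cases h : N < n
        · exact h2 _ (Nat.lt_succ_of_lt h)
        · obtain ⟨x, hx, -⟩ := h1 n (Nat.le_of_not_lt h)
          simp [hx] at hn
    · obtain ⟨h1, h2⟩ := hmem
      obtain ⟨x0, hx0, -⟩ := h1 0
      refine ⟨by simp [hx0], h2, fun n hn => ?_, fun n hn => ?_⟩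
      · obtain ⟨x, hx, -⟩ := h1 (n + 1); simp [hx] at hn
      · obtain ⟨x, hx, -⟩ := h1 n; simp [hx] at hn
  · rintro ⟨h1, h2, h3, h4⟩
    by_cases hfin : ∃ n, p n = pdsZero X
    · left
      rw [Set.mem_iUnion]
      have hN' := Nat.find_spec hfin
      have hmin := fun m (hm : m < Nat.find hfin) => Nat.find_min hfin hm
      have hpos : 0 < Nat.find hfin := by
        rcases Nat.eq_zero_or_pos (Nat.find hfin) with h | h
        · exact absurd (h ▸ hN') h1
        · exact h
      obtain ⟨N, hNeq⟩ : ∃ N, Nat.find hfin = N + 1 := ⟨Nat.find hfin - 1, (Nat.succ_pred_eq_of_pos hpos).symm⟩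
      refine ⟨N, fun n hn => ?_, fun n hn => ?_, h2, fun x hx => ?_⟩
      · have hne : p n ≠ pdsZero X := hmin n (by omega)
        cases hpn : p n with
        | inl x => exact ⟨x, rfl, mem_pdsDom_of h2 n x hpn⟩
        | inr u => exact absurd (by simpa using hpn) hne
      · have key : ∀ k, p (N + 1 + k) = pdsZero X := by
          intro k
          induction k with
          | zero => simpa using (hNeq ▸ hN')
          | succ k ih => exact h4 _ ih
        have := key (n - (N + 1))
        rwa [Nat.add_sub_cancel' hn] at this
      · have hz : p (N + 1) = pdsZero X := by simpa using (hNeq ▸ hN')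
        rcases h3 N hz with h | ⟨y, hy, hy'⟩
        · simp [hx] at h
        · rw [hx] at hy
          obtain rfl := Sum.inl_injective hy
          exact hy'
    · right
      push_neg at hfin
      refine ⟨fun n => ?_, h2⟩
      cases hpn : p n with
      | inl x => exact ⟨x, rfl, mem_pdsDom_of h2 n x hpn⟩
      | inr u => exact absurd (by simpa using hpn) (hfin n)

lemma goodSet_closed [T2Space X] {Δ : Set X} (hΔ : IsClopen Δ) {α : X → X}
    (hα : ContinuousOn α Δ) (h : IsOpen (α '' Δ)) : IsClosed (goodSet α Δ) := by
  have hzc : IsClosed ({pdsZero X} : Set (X ⊕ Unit)) := by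
    have : ({pdsZero X} : Set (X ⊕ Unit)) = Set.range Sum.inr := by
      ext z; cases z <;> simp
    rw [this]; exact isClosed_range_inr
  have hzo : IsOpen ({pdsZero X} : Set (X ⊕ Unit)) := by
    have : ({pdsZero X} : Set (X ⊕ Unit)) = Set.range Sum.inr := by
      ext z; cases z <;> simp
    rw [this]; exact isOpen_range_inr
  have hh : Continuous (pdsH α Δ) := continuous_pdsH hΔ hα
  have hne : ∀ n : ℕ, IsClosed {p : ℕ → X ⊕ Unit | p n ≠ pdsZero X} := fun n => by
    have : IsClosed ((fun p : ℕ → X ⊕ Unit => p n) ⁻¹' ({pdsZero X}ᶜ)) :=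
      (isClosed_compl_iff.mpr hzo).preimage (continuous_apply n)
    exact this
  have heq : ∀ n : ℕ, IsClosed {p : ℕ → X ⊕ Unit | p n = pdsZero X} := fun n => by
    have : IsClosed ((fun p : ℕ → X ⊕ Unit => p n) ⁻¹' ({pdsZero X} : Set (X ⊕ Unit))) :=
      hzc.preimage (continuous_apply n)
    exact this
  refine IsClosed.inter (hne 0) (IsClosed.inter ?_ (IsClosed.inter ?_ ?_))
  · refine isClosed_iInter fun n => (heq (n+1)).union (IsClosed.inter ?_ ?_)
    · exact (isClosed_compl_iff.mpr hzo).preimage (hh.comp (continuous_apply (n+1)))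
    · exact isClosed_eq (continuous_apply n) (hh.comp (continuous_apply (n+1)))
  · refine isClosed_iInter fun n => (((hne (n+1)).union (heq n)).union ?_)
    have himg : IsClosed (Sum.inl '' (α '' Δ)ᶜ : Set (X ⊕ Unit)) :=
      Topology.IsClosedEmbedding.inl.isClosedMap _ h.isClosed_compl
    have : IsClosed ((fun p : ℕ → X ⊕ Unit => p n) ⁻¹' (Sum.inl '' (α '' Δ)ᶜ)) :=
      himg.preimage (continuous_apply n)
    exact this
  · exact isClosed_iInter fun n => (hne n).union (heq (n+1))

lemma XN_zero_eq (α : X → X) (Δ : Set X) :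
    XN α Δ 0 = (fun x : X => fun n : ℕ => if n = 0 then (Sum.inl x : X ⊕ Unit) else pdsZero X) ''
      (α '' Δ)ᶜ := by
  ext p
  constructor
  · rintro ⟨h1, h2, _h3, h4⟩
    obtain ⟨x, hx, -⟩ := h1 0 le_rfl
    refine ⟨x, h4 x hx, ?_⟩
    funext n
    cases n with
    | zero => simp [hx]
    | succ n => simp [h2 (n+1) (Nat.succ_pos n)]
  · rintro ⟨x, hx, rfl⟩
    refine ⟨fun n hn => ?_, fun n hn => ?_, fun n y hy => ?_, fun y hy => ?_⟩
    · interval_cases n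
      exact ⟨x, rfl, Set.mem_univ x⟩
    · simp [show n ≠ 0 by omega]
    · simp at hy
    · obtain rfl : x = y := by simpa using hy
      exact hx

lemma XN_zero_compact_iff [T2Space X] [CompactSpace X] (α : X → X) (Δ : Set X) :
    IsCompact (XN α Δ 0) ↔ IsCompact ((α '' Δ)ᶜ) := by
  constructor
  · intro h
    have himg : (fun p : ℕ → X ⊕ Unit => p 0) '' XN α Δ 0 = Sum.inl '' (α '' Δ)ᶜ := by
      rw [XN_zero_eq, Set.image_image]
      simp
    have h0 : IsCompact (Sum.inl '' (α '' Δ)ᶜ) := himg ▸ h.image (continuous_apply 0)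
    exact Topology.IsEmbedding.inl.isCompact_iff.mpr h0
  · intro h
    rw [XN_zero_eq]
    refine h.image ?_
    refine continuous_pi fun n => ?_
    cases n with
    | zero => simpa using continuous_inl
    | succ n => simpa using continuous_const

end Aux

/-- `Δ₋₁ = α(Δ₁)` is open iff `X̃` is compact iff `X₀` is compact. -/
theorem Xtilde_compact_iff {X : Type*} [TopologicalSpace X] [CompactSpace X] [T2Space X]
    (Δ : Set X) (hΔ : IsClopen Δ) (α : X → X) (hα : ContinuousOn α Δ) :
    (IsOpen (α '' Δ) ↔ IsCompact (Xtilde α Δ)) ∧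
    (IsOpen (α '' Δ) ↔ IsCompact (XN α Δ 0)) := by
  have hac : IsOpen (α '' Δ) ↔ IsCompact ((α '' Δ)ᶜ) := by
    constructor
    · intro h
      exact h.isClosed_compl.isCompact
    · intro h
      rw [← isClosed_compl_iff]
      exact h.isClosed
  have hac' : IsOpen (α '' Δ) ↔ IsCompact (XN α Δ 0) := by
    rw [hac, XN_zero_compact_iff]
  refine ⟨⟨fun h => ?_, fun h => ?_⟩, hac'⟩
  · rw [xtilde_eq_goodSet]
    exact (goodSet_closed hΔ hα h).isCompact
  · refine hac'.mpr ?_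
    have h0 : XN α Δ 0 = Xtilde α Δ ∩ {p : ℕ → X ⊕ Unit | p 1 = pdsZero X} := by
      ext p
      constructor
      · rintro ⟨h1, h2, h3, h4⟩
        exact ⟨Or.inl (Set.mem_iUnion.mpr ⟨0, h1, h2, h3, h4⟩), h2 1 Nat.one_pos⟩
      · rintro ⟨hmem | hmem, hz⟩
        · rw [Set.mem_iUnion] at hmem
          obtain ⟨N, hN⟩ := hmem
          rcases Nat.eq_zero_or_pos N with rfl | hpos
          · exact hN
          · obtain ⟨x, hx, -⟩ := hN.1 1 hpos
            simp [hx] at hz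
        · obtain ⟨x, hx, -⟩ := hmem.1 1
          simp [hx] at hz
    rw [h0]
    have hzc : IsClosed ({pdsZero X} : Set (X ⊕ Unit)) := by
      have he : ({pdsZero X} : Set (X ⊕ Unit)) = Set.range Sum.inr := by
        ext z; cases z <;> simp
      rw [he]; exact isClosed_range_inr
    have hcl1 : IsClosed {p : ℕ → X ⊕ Unit | p 1 = pdsZero X} := by
      have : IsClosed ((fun p : ℕ → X ⊕ Unit => p 1) ⁻¹' ({pdsZero X} : Set (X ⊕ Unit))) :=
        hzc.preimage (continuous_apply 1)
      exact this
    exact h.inter_right hcl1
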